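/- Let S be a standard ℕ^p-graded polynomial ring over a field and J ⊂ S a square-free monomial ideal whose Stanley–Reisner complex Δ(J) is shellable with shelling order corresponding to minimal primes 𝔭_1,...,𝔭_k (all of the same codimension c). Then for each 2 ≤ j ≤ k, the ideal (𝔭_1 ∩ ... ∩ 𝔭_{j-1}) + 𝔭_j is a finite intersection of ideals of the form (𝔭_j, x) where x ranges over a set of distinct variables contained in (𝔭_1 + ... + 𝔭_{j-1}) but not in 𝔭_j. -/

import Mathlib

open MvPolynomial

/-- The multidegree of a monomial exponent `d` in the standard `ℕ^p`-graded polynomial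
ring whose variables `x_{i,j}` (`0 ≤ j ≤ m_i`) have degree `e_i ∈ ℕ^p`. -/
noncomputable def mdeg {p : ℕ} {m : Fin p → ℕ}
    (d : (Σ i : Fin p, Fin (m i + 1)) →₀ ℕ) : Fin p → ℕ :=
  fun i => ∑ x ∈ d.support, if x.1 = i then d x else 0

/-- The multigraded Hilbert function of `S/I`: the `K`-dimension of the degree-`v`
component of `S/I`, i.e. of the image in `S/I` of the span of the monomials of
multidegree `v`. -/
noncomputable def hilbFn {p : ℕ} {m : Fin p → ℕ} (K : Type*) [Field K]
    (I : Ideal (MvPolynomial (Σ i : Fin p, Fin (m i + 1)) K)) (v : Fin p → ℕ) : ℕ :=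
  Module.finrank K
    (Submodule.map (Ideal.Quotient.mkₐ K I).toLinearMap
      (Submodule.span K
        {f | ∃ d : (Σ i : Fin p, Fin (m i + 1)) →₀ ℕ, mdeg d = v ∧ f = monomial d 1}))

/-- The monomial prime ideal generated by a set `V` of variables. -/
noncomputable def monomialPrime {p : ℕ} {m : Fin p → ℕ} (K : Type*) [Field K]
    (V : Finset (Σ i : Fin p, Fin (m i + 1))) :
    Ideal (MvPolynomial (Σ i : Fin p, Fin (m i + 1)) K) :=
  Ideal.span (MvPolynomial.X '' (V : Set (Σ i : Fin p, Fin (m i + 1))))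

open scoped Classical

/-- The facet of the Stanley–Reisner complex corresponding to the monomial prime
generated by the variable set `V`: the complement of `V` in the variable set. -/
noncomputable def srFacet {p : ℕ} {m : Fin p → ℕ}
    (V : Finset (Σ i : Fin p, Fin (m i + 1))) : Finset (Σ i : Fin p, Fin (m i + 1)) :=
  Finset.univ \ V

section Aux

variable {σ : Type*} {K : Type*} [Field K]

private lemma memSpanX {f : MvPolynomial σ K} {A : Finset σ} :
    f ∈ Ideal.span (X '' (A : Set σ) : Set (MvPolynomial σ K)) ↔
      ∀ d ∈ f.support, ∃ x ∈ A, d x ≠ 0 := by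
  rw [mem_ideal_span_X_image]; simp

private lemma spanX_mono {A B : Finset σ} (h : A ⊆ B) :
    Ideal.span (X '' (A : Set σ) : Set (MvPolynomial σ K)) ≤
      Ideal.span (X '' (B : Set σ)) :=
  Ideal.span_mono (Set.image_mono (by exact_mod_cast h))

private lemma spanX_sup (A B : Finset σ) :
    Ideal.span (X '' (A : Set σ) : Set (MvPolynomial σ K)) ⊔
      Ideal.span (X '' (B : Set σ)) = Ideal.span (X '' ((A ∪ B : Finset σ) : Set σ)) := by
  rw [Finset.coe_union, Set.image_union, Ideal.span_union]

private lemma decompAux (f : MvPolynomial σ K) (B : Finset σ) :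
    ∃ g h : MvPolynomial σ K, f = g + h ∧
      h ∈ Ideal.span (X '' (B : Set σ) : Set (MvPolynomial σ K)) ∧
      g.support ⊆ f.support ∧ ∀ d ∈ g.support, ∀ x ∈ B, d x = 0 := by
  classical
  set s := f.support.filter (fun d => ∀ x ∈ B, d x = 0) with hs
  set g : MvPolynomial σ K := ∑ d ∈ s, monomial d (f.coeff d) with hgdef
  have hg : ∀ e, g.coeff e = if e ∈ s then f.coeff e else 0 := by
    intro e
    rw [hgdef, MvPolynomial.coeff_sum]
    simp_rw [coeff_monomial]
    exact Finset.sum_ite_eq' s e _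
  have hgsupp : g.support ⊆ s := by
    intro d hd
    rw [mem_support_iff, hg d] at hd
    by_contra h; simp [h] at hd
  refine ⟨g, f - g, by ring, ?_, hgsupp.trans (Finset.filter_subset _ _), ?_⟩
  · rw [memSpanX]
    intro d hd
    rw [mem_support_iff, coeff_sub, hg d] at hd
    by_cases hds : d ∈ s
    · simp [hds] at hd
    · have hdf : d ∈ f.support := by
        rw [mem_support_iff]; intro h0; simp [hds, h0] at hd
      have : ¬ ∀ x ∈ B, d x = 0 := by
        intro hall; exact hds (Finset.mem_filter.mpr ⟨hdf, hall⟩)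
      push_neg at this; exact this
  · intro d hd
    exact (Finset.mem_filter.mp (hgsupp hd)).2

end Aux

/-- **Structure of the shelling intersections.** Let `J = 𝔭_1 ∩ ⋯ ∩ 𝔭_q` be a square-free
monomial ideal (primes of common codimension `c`, pairwise incomparable) whose
Stanley–Reisner complex is shellable with shelling order `F_1, …, F_q` (stated via the
standard combinatorial form of shellability). Then for each `j ≥ 2`, the ideal
`(𝔭_1 ∩ ⋯ ∩ 𝔭_{j-1}) + 𝔭_j` is a finite intersection of ideals `(𝔭_j, x)` where `x`
ranges over a set of distinct variables lying in `𝔭_1 + ⋯ + 𝔭_{j-1}` but not in `𝔭_j`. -/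
theorem shelling_intersection_structure {p q : ℕ} {m : Fin p → ℕ} (K : Type*) [Field K]
    (V : Fin q → Finset (Σ i : Fin p, Fin (m i + 1)))
    (c : ℕ) (hpure : ∀ i, (V i).card = c)
    (hmin : ∀ i j : Fin q, i ≠ j → ¬ V i ⊆ V j)
    (hshell : ∀ j s : Fin q, s < j →
      ∃ l : Fin q, l < j ∧
        srFacet (V s) ∩ srFacet (V j) ⊆ srFacet (V l) ∩ srFacet (V j) ∧
        (srFacet (V l) ∩ srFacet (V j)).card + 1 = (srFacet (V j)).card)
    (j : Fin q) (hj : (j : ℕ) ≠ 0) :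
    ∃ W : Finset (Σ i : Fin p, Fin (m i + 1)),
      (∀ x ∈ W, x ∉ V j ∧ ∃ l : Fin q, l < j ∧ x ∈ V l) ∧
      ((⨅ l : Fin q, ⨅ _ : l < j, monomialPrime K (V l)) ⊔ monomialPrime K (V j)) =
        ⨅ x ∈ W, (monomialPrime K (V j) ⊔ Ideal.span {MvPolynomial.X x}) := by
  classical
  set W : Finset (Σ i : Fin p, Fin (m i + 1)) :=
    Finset.univ.filter (fun x => x ∉ V j ∧ ∃ l : Fin q, l < j ∧ V l ∪ V j = insert x (V j))
    with hW
  have hWmem : ∀ x ∈ W, x ∉ V j ∧ ∃ l : Fin q, l < j ∧ x ∈ V l := by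
    intro x hx
    obtain ⟨-, hxj, l, hl, heq⟩ := Finset.mem_filter.mp hx
    refine ⟨hxj, l, hl, ?_⟩
    have hxmem : x ∈ V l ∪ V j := heq ▸ Finset.mem_insert_self x (V j)
    rcases Finset.mem_union.mp hxmem with h | h
    · exact h
    · exact absurd h hxj
  refine ⟨W, hWmem, ?_⟩
  -- rewrite the terms of the RHS
  have hterm : ∀ x : (Σ i : Fin p, Fin (m i + 1)),
      monomialPrime K (V j) ⊔ Ideal.span {MvPolynomial.X x} =
      Ideal.span (X '' ((insert x (V j) : Finset (Σ i : Fin p, Fin (m i + 1))) :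
        Set (Σ i : Fin p, Fin (m i + 1)))) := by
    intro x
    rw [monomialPrime, Finset.coe_insert, Set.image_insert_eq, Ideal.span_insert,
      sup_comm]
  -- Step 1: (⨅ P_l) ⊔ P_j = ⨅ (P_{V l ∪ V j})
  have step1 : ((⨅ l : Fin q, ⨅ _ : l < j, monomialPrime K (V l)) ⊔ monomialPrime K (V j)) =
      ⨅ l : Fin q, ⨅ _ : l < j, Ideal.span (X '' ((V l ∪ V j :
        Finset (Σ i : Fin p, Fin (m i + 1))) : Set (Σ i : Fin p, Fin (m i + 1))) :
        Set (MvPolynomial (Σ i : Fin p, Fin (m i + 1)) K)) := by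
    simp only [monomialPrime]
    apply le_antisymm
    · apply sup_le
      · exact le_iInf fun l => le_iInf fun hl =>
          ((iInf_le _ l).trans (iInf_le _ hl)).trans (spanX_mono Finset.subset_union_left)
      · exact le_iInf fun l => le_iInf fun hl => spanX_mono Finset.subset_union_right
    · intro f hf
      simp only [Submodule.mem_iInf] at hf
      obtain ⟨g, h, hfe, hhB, hgsupp, hgzero⟩ := decompAux f (V j)
      rw [Submodule.mem_sup]
      refine ⟨g, ?_, h, hhB, hfe.symm⟩
      simp only [Submodule.mem_iInf]
      intro l hl
      rw [memSpanX]
      intro d hd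
      have hfl := hf l hl
      rw [memSpanX] at hfl
      obtain ⟨x, hx, hxd⟩ := hfl d (hgsupp hd)
      rcases Finset.mem_union.mp hx with h1 | h2
      · exact ⟨x, h1, hxd⟩
      · exact absurd (hgzero d hd x h2) hxd
  rw [step1]
  -- Step 2: ⨅_{l<j} P_{V l ∪ V j} = ⨅_{x ∈ W} P_{insert x (V j)}
  apply le_antisymm
  · apply le_iInf; intro x; apply le_iInf; intro hx
    obtain ⟨-, hxj, l, hl, heq⟩ := Finset.mem_filter.mp hx
    rw [hterm x, ← heq]
    exact (iInf_le _ l).trans (iInf_le _ hl)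
  · apply le_iInf; intro l; apply le_iInf; intro hl
    obtain ⟨l', hl', hsub, hcard⟩ := hshell j l hl
    have hfc : ∀ A : Finset (Σ i : Fin p, Fin (m i + 1)), srFacet (m := m) A = Aᶜ := fun A =>
      (Finset.compl_eq_univ_sdiff A).symm
    simp only [hfc, ← Finset.compl_union] at hsub hcard
    have hsub' : V l' ∪ V j ⊆ V l ∪ V j := Finset.compl_subset_compl.mp hsub
    have hc1 : (V l' ∪ V j).card ≤ Fintype.card (Σ i : Fin p, Fin (m i + 1)) :=
      Finset.card_le_univ _
    have hc2 : (V j).card ≤ (V l' ∪ V j).card :=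
      Finset.card_le_card Finset.subset_union_right
    rw [Finset.card_compl, Finset.card_compl] at hcard
    have hcard' : (V l' ∪ V j).card = (V j).card + 1 := by omega
    have hsd : ((V l' ∪ V j) \ V j).card = 1 := by
      rw [Finset.card_sdiff_of_subset Finset.subset_union_right]; omega
    obtain ⟨x, hxeq⟩ := Finset.card_eq_one.mp hsd
    have hins : V l' ∪ V j = insert x (V j) := by
      rw [Finset.insert_eq, ← hxeq,
        Finset.sdiff_union_of_subset Finset.subset_union_right]
    have hxnj : x ∉ V j := by
      have hxm : x ∈ (V l' ∪ V j) \ V j := hxeq ▸ Finset.mem_singleton_self x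
      exact (Finset.mem_sdiff.mp hxm).2
    have hxW : x ∈ W := Finset.mem_filter.mpr ⟨Finset.mem_univ x, hxnj, l', hl', hins⟩
    calc (⨅ x ∈ W, (monomialPrime K (V j) ⊔ Ideal.span {MvPolynomial.X x}))
        ≤ monomialPrime K (V j) ⊔ Ideal.span {MvPolynomial.X x} :=
          (iInf_le _ x).trans (iInf_le _ hxW)
      _ = Ideal.span (X '' ((V l' ∪ V j : Finset (Σ i : Fin p, Fin (m i + 1))) :
            Set (Σ i : Fin p, Fin (m i + 1)))) := by rw [hterm x, hins]
      _ ≤ Ideal.span (X '' ((V l ∪ V j : Finset (Σ i : Fin p, Fin (m i + 1))) :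
            Set (Σ i : Fin p, Fin (m i + 1)))) := spanX_mono hsub'
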